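/- Let B ⊆ A be a regular inclusion of C*-algebras, N a *-semigroup of normalizers with dense span in A, and E : A → B a faithful N-invariant conditional expectation. If K is an N-invariant regular ideal of B, then J_K := {a ∈ A : E(a*a) ∈ K} is a regular ideal of A satisfying J_K ∩ B = K = E(J_K) and (J_K)^⊥ = J_{K^{⊥_B}}. -/

import Mathlib

set_option linter.unusedSectionVars false
set_option linter.unusedVariables false
set_option maxHeartbeats 1000000


/-- Two-sided annihilator of a subset of an algebra. -/
def ann {A : Type*} [NonUnitalNonAssocSemiring A] (X : Set A) : Set A :=
  {a | ∀ x ∈ X, a * x = 0 ∧ x * a = 0}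

/-- A (not necessarily closed) two-sided ideal, as a subset. -/
def IsAlgIdeal {A : Type*} [NonUnitalNonAssocSemiring A] (J : Set A) : Prop :=
  (0 : A) ∈ J ∧ (∀ x ∈ J, ∀ y ∈ J, x + y ∈ J) ∧ ∀ a : A, ∀ x ∈ J, a * x ∈ J ∧ x * a ∈ J

/-- A closed two-sided ideal. -/
def IsIdeal {A : Type*} [NonUnitalNormedRing A] (J : Set A) : Prop :=
  IsAlgIdeal J ∧ IsClosed J

/-- A regular ideal: a closed two-sided ideal equal to its double annihilator. -/
def IsRegularIdeal {A : Type*} [NonUnitalNormedRing A] (J : Set A) : Prop :=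
  IsIdeal J ∧ J = ann (ann J)

variable {A : Type*} [NonUnitalNormedRing A] [StarRing A] [CStarRing A] [CompleteSpace A]
  [NormedSpace ℂ A] [IsScalarTower ℂ A A] [SMulCommClass ℂ A A] [StarModule ℂ A]
  [PartialOrder A] [StarOrderedRing A]

/-- `B` is a (non-unital, closed, star-closed) C*-subalgebra of `A`. -/
def IsCStarSubalgebra (B : Set A) : Prop :=
  (0 : A) ∈ B ∧ (∀ x ∈ B, ∀ y ∈ B, x + y ∈ B) ∧ (∀ x ∈ B, ∀ y ∈ B, x * y ∈ B) ∧
  (∀ (c : ℂ), ∀ x ∈ B, c • x ∈ B) ∧ (∀ x ∈ B, star x ∈ B) ∧ IsClosed B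

/-- `B` contains an approximate unit for `A`. -/
def ContainsApproxUnit (B : Set A) : Prop :=
  ∀ a : A, ∀ ε > (0 : ℝ), ∃ b ∈ B, ‖b‖ ≤ 1 ∧ ‖a - b * a‖ < ε ∧ ‖a - a * b‖ < ε

/-- `B ⊆ A` is an inclusion of C*-algebras: a C*-subalgebra containing an
approximate unit for `A`. -/
def IsCStarInclusion (B : Set A) : Prop :=
  IsCStarSubalgebra B ∧ ContainsApproxUnit B

/-- `n` is a normalizer of `B` in `A`: `nBn* ⊆ B` and `n*Bn ⊆ B`. -/
def IsNormalizer (B : Set A) (n : A) : Prop :=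
  (∀ b ∈ B, n * b * star n ∈ B) ∧ (∀ b ∈ B, star n * b * n ∈ B)

/-- `B ⊆ A` is a regular inclusion: an inclusion whose normalizers span a dense
subspace of `A`. -/
def IsRegularInclusion (B : Set A) : Prop :=
  IsCStarInclusion B ∧
  closure (Submodule.span ℂ {n | IsNormalizer B n} : Set A) = Set.univ

/-- `E : A → A` is a conditional expectation onto `B`. -/
def IsCondExp (B : Set A) (E : A → A) : Prop :=
  (∀ a, E a ∈ B) ∧ (∀ b ∈ B, E b = b) ∧
  (∀ x y, E (x + y) = E x + E y) ∧ (∀ (c : ℂ) (x : A), E (c • x) = c • E x) ∧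
  (∀ a : A, 0 ≤ a → 0 ≤ E a) ∧ (∀ a, ‖E a‖ ≤ ‖a‖) ∧
  (∀ b ∈ B, ∀ a, E (b * a) = b * E a ∧ E (a * b) = E a * b)

/-- Faithfulness of a positive map: `E(a*a) = 0 → a = 0`. -/
def IsFaithful (E : A → A) : Prop := ∀ a, E (star a * a) = 0 → a = 0

/-- `N` is a `*`-semigroup of normalizers of `B` with dense linear span in `A`. -/
def IsNormalizerSemigroup (B N : Set A) : Prop :=
  (∀ n ∈ N, IsNormalizer B n) ∧ (∀ n ∈ N, star n ∈ N) ∧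
  (∀ m ∈ N, ∀ n ∈ N, m * n ∈ N) ∧
  closure (Submodule.span ℂ N : Set A) = Set.univ

/-- `K` is invariant under `N`: `nKn* ⊆ K` for all `n ∈ N`. -/
def InvariantUnder (N K : Set A) : Prop := ∀ n ∈ N, ∀ k ∈ K, n * k * star n ∈ K

/-- `E` is `N`-invariant: `E(nan*) = nE(a)n*` for all `n ∈ N`. -/
def IsInvariantCondExp (N : Set A) (E : A → A) : Prop :=
  ∀ n ∈ N, ∀ a : A, E (n * a * star n) = n * E a * star n

/-- A closed two-sided ideal of the subalgebra `B`. -/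
def IsIdealIn (B K : Set A) : Prop :=
  K ⊆ B ∧ (0 : A) ∈ K ∧ (∀ x ∈ K, ∀ y ∈ K, x + y ∈ K) ∧
  (∀ b ∈ B, ∀ x ∈ K, b * x ∈ K ∧ x * b ∈ K) ∧ IsClosed K

/-- A regular ideal of the subalgebra `B`: `K = K^{⊥_B ⊥_B}` with annihilators
computed inside `B`. -/
def IsRegularIdealIn (B K : Set A) : Prop :=
  IsIdealIn B K ∧ K = ann (ann K ∩ B) ∩ B

/-- `B ⊆ A` has the ideal intersection property. -/
def HasIIP (B : Set A) : Prop :=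
  ∀ J : Set A, IsIdeal J → J ≠ {0} → ∃ x ∈ J ∩ B, x ≠ 0

/-- `B ⊆ A` has the regular ideal intersection property. -/
def HasRIIP (B : Set A) : Prop :=
  ∀ J : Set A, IsRegularIdeal J → J ≠ {0} → ∃ x ∈ J ∩ B, x ≠ 0

/-- If `K` is an `N`-invariant regular ideal of `B`, then
`J_K = {a ∈ A : E(a*a) ∈ K}` is a regular ideal of `A` with
`J_K ∩ B = K = E(J_K)` and `(J_K)^⊥ = J_{K^{⊥_B}}`. -/

instance : NonUnitalCStarAlgebra A where

/-- The induced ideal `J_K`. -/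
def JSet (E : A → A) (K : Set A) : Set A := {a | E (star a * a) ∈ K}

namespace JKAux

lemma ann_zero_mem (X : Set A) : (0:A) ∈ ann X := fun x _ => ⟨zero_mul x, mul_zero x⟩

lemma ann_add_mem {X : Set A} {a b : A} (ha : a ∈ ann X) (hb : b ∈ ann X) :
    a + b ∈ ann X := fun x hx =>
  ⟨by rw [add_mul, (ha x hx).1, (hb x hx).1, add_zero],
   by rw [mul_add, (ha x hx).2, (hb x hx).2, add_zero]⟩

lemma ann_smul_mem {X : Set A} {a : A} (c : ℂ) (ha : a ∈ ann X) : c • a ∈ ann X := fun x hx =>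
  ⟨by rw [smul_mul_assoc, (ha x hx).1, smul_zero],
   by rw [mul_smul_comm, (ha x hx).2, smul_zero]⟩

lemma ann_isClosed (X : Set A) : IsClosed (ann X) := by
  have h : ann X = ⋂ x ∈ X, ({a : A | a * x = 0} ∩ {a : A | x * a = 0}) := by
    ext a
    simp only [ann, Set.mem_setOf_eq, Set.mem_iInter, Set.mem_inter_iff]
  rw [h]
  refine isClosed_biInter fun x _ => IsClosed.inter ?_ ?_
  · exact isClosed_eq (continuous_id.mul continuous_const) continuous_const
  · exact isClosed_eq (continuous_const.mul continuous_id) continuous_const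

lemma subset_ann_ann (X : Set A) : X ⊆ ann (ann X) := fun x hx a ha =>
  ⟨(ha x hx).2, (ha x hx).1⟩

lemma eq_zero_of_star_mul_self {x : A} (h : star x * x = 0) : x = 0 :=
  (CStarRing.star_mul_self_eq_zero_iff x).mp h

lemma eq_zero_of_mul_star_self {x : A} (h : x * star x = 0) : x = 0 :=
  (CStarRing.mul_star_self_eq_zero_iff x).mp h

lemma norm_sq_star_mul_self (x : A) : ‖star x * x‖ = ‖x‖ * ‖x‖ :=
  CStarRing.norm_star_mul_self

/-- `a² ≤ ‖a‖ • a` for positive `a`. -/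
lemma sq_le_norm_smul {a : A} (ha : 0 ≤ a) : a * a ≤ ‖a‖ • a := by
  have hsa : IsSelfAdjoint a := IsSelfAdjoint.of_nonneg ha
  have h1 : cfcₙ (fun t : ℝ => t * t) a = a * a := by
    rw [cfcₙ_mul (fun t : ℝ => t) (fun t : ℝ => t) a, cfcₙ_id' ℝ a]
  have h2 : cfcₙ (fun t : ℝ => ‖a‖ * t) a = ‖a‖ • a := cfcₙ_const_mul_id ‖a‖ a
  rw [← h1, ← h2]
  refine cfcₙ_mono (fun x hx => ?_)
  have hx0 : 0 ≤ x := quasispectrum_nonneg_of_nonneg a ha x hx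
  have hxle : x ≤ ‖a‖ := by
    have := norm_apply_le_norm_cfcₙ (id : ℝ → ℝ) a hx
    rw [cfcₙ_id ℝ a] at this
    calc x ≤ |x| := le_abs_self x
    _ ≤ ‖a‖ := by simpa [Real.norm_eq_abs] using this
  nlinarith


lemma quasi_mem_Icc {p : A} (hp : 0 ≤ p) {x : ℝ} (hx : x ∈ quasispectrum ℝ p) :
    0 ≤ x ∧ x ≤ ‖p‖ := by
  have hsa : IsSelfAdjoint p := IsSelfAdjoint.of_nonneg hp
  refine ⟨quasispectrum_nonneg_of_nonneg p hp x hx, ?_⟩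
  have := norm_apply_le_norm_cfcₙ (id : ℝ → ℝ) p hx
  rw [cfcₙ_id ℝ p] at this
  calc x ≤ |x| := le_abs_self x
  _ ≤ ‖p‖ := by simpa [Real.norm_eq_abs] using this

/-- `cfcₙ g p` belongs to any closed set containing `p` that is stable under the
relevant operations. -/
lemma cfcₙ_mem_of_closed (S : Set A) (hSc : IsClosed S)
    (hadd : ∀ x ∈ S, ∀ y ∈ S, x + y ∈ S) (hsmul : ∀ (r : ℝ), ∀ x ∈ S, r • x ∈ S)
    {p : A} (hp : p ∈ S) (hpmul : ∀ x ∈ S, x * p ∈ S) (hp0 : 0 ≤ p)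
    (g : ℝ → ℝ) (hg : Continuous g) (hg0 : g 0 = 0) : cfcₙ g p ∈ S := by
  have hsa : IsSelfAdjoint p := IsSelfAdjoint.of_nonneg hp0
  -- powers
  let pp : ℕ → A := fun n => Nat.rec p (fun _ q => q * p) n
  have hpow : ∀ n : ℕ, pp n ∈ S := by
    intro n; induction n with
    | zero => simpa [pp] using hp
    | succ n ih => exact hpmul _ ih
  have hcfcpow : ∀ n : ℕ, cfcₙ (fun t : ℝ => t ^ (n + 1)) p = pp n := by
    intro n; induction n with
    | zero => simpa [pp, pow_one] using cfcₙ_id' ℝ p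
    | succ n ih =>
        have h2 : (fun t : ℝ => t ^ (n + 1 + 1)) = fun t : ℝ => t ^ (n + 1) * t := by
          ext t; ring
        rw [h2, cfcₙ_mul (fun t : ℝ => t ^ (n + 1)) (fun t : ℝ => t) p, ih,
          cfcₙ_id' ℝ p]
  have hpoly : ∀ r : Polynomial ℝ, cfcₙ (fun t => t * r.eval t) p ∈ S := by
    intro r
    induction r using Polynomial.induction_on' with
    | add f g hf hg =>
        have : (fun t : ℝ => t * (f + g).eval t)
            = fun t : ℝ => t * f.eval t + t * g.eval t := by
          ext t; simp [Polynomial.eval_add]; ring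
        rw [this, cfcₙ_add (fun t : ℝ => t * f.eval t) (fun t : ℝ => t * g.eval t) p
          (by fun_prop) (by simp) (by fun_prop) (by simp)]
        exact hadd _ hf _ hg
    | monomial n c =>
        have : (fun t : ℝ => t * (Polynomial.monomial n c).eval t)
            = fun t : ℝ => c * t ^ (n + 1) := by
          ext t; simp [Polynomial.eval_monomial]; ring
        rw [this, cfcₙ_const_mul c (fun t : ℝ => t ^ (n + 1)) p (by fun_prop), hcfcpow n]
        exact hsmul c _ (hpow n)
  -- approximation
  rw [← hSc.closure_eq]
  rw [Metric.mem_closure_iff]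
  intro ε hε
  obtain ⟨q, hq⟩ := exists_polynomial_near_of_continuousOn 0 ‖p‖ g hg.continuousOn
    (ε/2) (half_pos hε)
  have h00 : (0:ℝ) ∈ Set.Icc (0:ℝ) ‖p‖ := ⟨le_refl _, norm_nonneg _⟩
  have hc0 : |q.coeff 0| < ε/2 := by
    have := hq 0 h00
    simpa [hg0, Polynomial.coeff_zero_eq_eval_zero] using this
  set r := q.divX with hr
  have hqeval : ∀ t : ℝ, q.eval t = t * r.eval t + q.coeff 0 := by
    intro t
    conv_lhs => rw [← Polynomial.divX_mul_X_add q]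
    simp [hr]; ring
  refine ⟨cfcₙ (fun t => t * r.eval t) p, hpoly r, ?_⟩
  rw [dist_eq_norm, ← cfcₙ_sub (R := ℝ) g (fun t => t * r.eval t) p
    hg.continuousOn (by simpa using hg0) (by fun_prop) (by simp)]
  have hbound : ∀ x ∈ quasispectrum ℝ p, ‖g x - x * r.eval x‖ ≤ ε/2 + |q.coeff 0| := by
    intro x hx
    obtain ⟨hx0, hxle⟩ := quasi_mem_Icc hp0 hx
    have h1 : |q.eval x - g x| < ε/2 := hq x ⟨hx0, hxle⟩
    have h2 : g x - x * r.eval x = (g x - q.eval x) + q.coeff 0 := by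
      rw [hqeval x]; ring
    rw [Real.norm_eq_abs, h2]
    calc |(g x - q.eval x) + q.coeff 0| ≤ |g x - q.eval x| + |q.coeff 0| := abs_add_le _ _
    _ ≤ ε/2 + |q.coeff 0| := by
        have : |g x - q.eval x| = |q.eval x - g x| := abs_sub_comm _ _
        rw [this]; exact add_le_add h1.le (le_refl _)
  calc ‖cfcₙ (fun x => g x - x * r.eval x) p‖ ≤ ε/2 + |q.coeff 0| := norm_cfcₙ_le hbound
  _ < ε/2 + ε/2 := by linarith
  _ = ε := by ring


/-- If `star b * b ∈ S` then `b` is a norm limit of elements `b * q` with `q ∈ S`. -/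
lemma mem_of_star_mul_self_mem (S : Set A) (hSc : IsClosed S)
    (hadd : ∀ x ∈ S, ∀ y ∈ S, x + y ∈ S) (hsmul : ∀ (r : ℝ), ∀ x ∈ S, r • x ∈ S)
    {b : A} (hbmul : ∀ x ∈ S, b * x ∈ S)
    (hpmul : ∀ x ∈ S, x * (star b * b) ∈ S)
    (hp : star b * b ∈ S) : b ∈ S := by
  set p := star b * b with hpdef
  have hp0 : (0:A) ≤ p := star_mul_self_nonneg b
  have hsa : IsSelfAdjoint p := IsSelfAdjoint.of_nonneg hp0
  rw [← hSc.closure_eq, Metric.mem_closure_iff]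
  intro ε hε
  obtain ⟨n, hn⟩ := exists_nat_one_div_lt (show (0:ℝ) < ε * ε by positivity)
  set c : ℝ := (n : ℝ) + 1 with hc
  have hc0 : 0 < c := by positivity
  set g : ℝ → ℝ := fun t => min 1 (c * t) with hgdef
  have hgc : Continuous g := continuous_const.min (continuous_const.mul continuous_id)
  have hg0 : g 0 = 0 := by simp [hgdef]
  set q : A := cfcₙ g p with hq
  have hqS : q ∈ S := cfcₙ_mem_of_closed S hSc hadd hsmul hp hpmul hp0 g hgc hg0
  have hqsa : IsSelfAdjoint q := cfcₙ_predicate g p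
  refine ⟨b * q, hbmul _ hqS, ?_⟩
  -- compute the norm
  have hexp : star (b - b * q) * (b - b * q) = p - p * q - q * p + q * (p * q) := by
    rw [star_sub, star_mul, hqsa.star_eq]
    rw [hpdef]
    noncomm_ring
  set h : ℝ → ℝ := fun t => t - t * g t - g t * t + g t * (t * g t) with hh
  have hcfch : cfcₙ h p = p - p * q - q * p + q * (p * q) := by
    have e1 : cfcₙ (fun t : ℝ => t) p = p := cfcₙ_id' ℝ p
    have e2 : cfcₙ (fun t : ℝ => t * g t) p = p * q := by
      rw [cfcₙ_mul (fun t : ℝ => t) g p (by fun_prop) (by simp) hgc.continuousOn hg0, e1]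
    have e3 : cfcₙ (fun t : ℝ => g t * t) p = q * p := by
      rw [cfcₙ_mul g (fun t : ℝ => t) p hgc.continuousOn hg0 (by fun_prop) (by simp), e1]
    have e4 : cfcₙ (fun t : ℝ => g t * (t * g t)) p = q * (p * q) := by
      rw [cfcₙ_mul g (fun t : ℝ => t * g t) p hgc.continuousOn hg0 (by fun_prop)
        (by simp [hg0]), e2]
    have e5 : cfcₙ (fun t : ℝ => t - t * g t) p = p - p * q := by
      rw [cfcₙ_sub (R := ℝ) (fun t : ℝ => t) (fun t : ℝ => t * g t) p (by fun_prop) (by simp)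
        (by fun_prop) (by simp [hg0]), e1, e2]
    have e6 : cfcₙ (fun t : ℝ => (t - t * g t) - g t * t) p = p - p * q - q * p := by
      rw [cfcₙ_sub (R := ℝ) (fun t : ℝ => t - t * g t) (fun t : ℝ => g t * t) p (by fun_prop)
        (by simp [hg0]) (by fun_prop) (by simp [hg0]), e5, e3]
    have e7 : cfcₙ (fun t : ℝ => ((t - t * g t) - g t * t) + g t * (t * g t)) p
        = p - p * q - q * p + q * (p * q) := by
      rw [cfcₙ_add (R := ℝ) (fun t : ℝ => (t - t * g t) - g t * t)
        (fun t : ℝ => g t * (t * g t)) p (by fun_prop) (by simp [hg0]) (by fun_prop)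
        (by simp [hg0]), e6, e4]
    rw [← e7]
  have hnorm2 : ‖b - b * q‖ * ‖b - b * q‖ ≤ 1 / c := by
    rw [← CStarRing.norm_star_mul_self, hexp, ← hcfch]
    refine norm_cfcₙ_le fun x hx => ?_
    obtain ⟨hx0, _⟩ := quasi_mem_Icc hp0 hx
    have hval : h x = x * (1 - g x) * (1 - g x) := by simp only [hh]; ring
    rcases le_or_gt 1 (c * x) with hcase | hcase
    · have : g x = 1 := min_eq_left hcase ▸ rfl
      rw [Real.norm_eq_abs, hval, this]
      simpa using by positivity
    · have hgx : g x = c * x := min_eq_right hcase.le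
      rw [Real.norm_eq_abs, hval, hgx]
      have h1 : 0 ≤ 1 - c * x := by linarith
      have h2 : 0 ≤ x * (1 - c * x) * (1 - c * x) := by positivity
      rw [abs_of_nonneg h2]
      have hxlt : x < 1 / c := by
        rw [lt_div_iff₀ hc0]; linarith [mul_comm c x]
      have h3 : 0 ≤ c * x := by positivity
      have h4 : (1 - c * x) * (1 - c * x) ≤ 1 := by nlinarith
      calc x * (1 - c * x) * (1 - c * x) = x * ((1 - c * x) * (1 - c * x)) := by ring
      _ ≤ x * 1 := mul_le_mul_of_nonneg_left h4 hx0
      _ = x := mul_one x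
      _ ≤ 1 / c := hxlt.le
  rw [dist_eq_norm]
  nlinarith [norm_nonneg (b - b * q), hn, hnorm2]


variable {B : Set A} {E : A → A}

lemma E_zero (hE : IsCondExp B E) : E 0 = 0 := by
  have := hE.2.2.2.1 0 0
  simpa using this

lemma E_smulR (hE : IsCondExp B E) (r : ℝ) (x : A) : E (r • x) = r • E x := by
  rw [← Complex.coe_smul, hE.2.2.2.1, Complex.coe_smul]

lemma E_neg (hE : IsCondExp B E) (x : A) : E (-x) = - E x := by
  have := hE.2.2.2.1 (-1) x
  simpa using this

lemma E_sub (hE : IsCondExp B E) (x y : A) : E (x - y) = E x - E y := by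
  rw [sub_eq_add_neg, hE.2.2.1, E_neg hE, ← sub_eq_add_neg]

lemma E_mono (hE : IsCondExp B E) {x y : A} (h : x ≤ y) : E x ≤ E y := by
  have h0 : (0:A) ≤ E (y - x) := hE.2.2.2.2.1 _ (sub_nonneg.mpr h)
  rw [E_sub hE] at h0
  exact sub_nonneg.mp h0

lemma E_selfAdjoint (hE : IsCondExp B E) {x : A} (hx : IsSelfAdjoint x) :
    IsSelfAdjoint (E x) := by
  have hdec : x⁺ - x⁻ = x := CFC.posPart_sub_negPart x hx
  have h1 : (0:A) ≤ E (x⁺) := hE.2.2.2.2.1 _ (CFC.posPart_nonneg x)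
  have h2 : (0:A) ≤ E (x⁻) := hE.2.2.2.2.1 _ (CFC.negPart_nonneg x)
  have h3 : E x = E (x⁺) - E (x⁻) := by rw [← E_sub hE, hdec]
  rw [h3]
  exact (IsSelfAdjoint.of_nonneg h1).sub (IsSelfAdjoint.of_nonneg h2)

lemma E_star (hE : IsCondExp B E) (x : A) : E (star x) = star (E x) := by
  set h : A := (2⁻¹ : ℂ) • (x + star x) with hh
  set k : A := ((2⁻¹ : ℂ) * Complex.I) • (star x - x) with hk
  have hsa : IsSelfAdjoint h := by
    rw [hh]
    simp only [IsSelfAdjoint, star_smul, star_add, star_star]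
    rw [add_comm]
    congr 1
    simp [Complex.ext_iff]
  have ksa : IsSelfAdjoint k := by
    rw [hk]
    simp only [IsSelfAdjoint, star_smul, star_sub, star_star]
    rw [← neg_sub x (star x), smul_neg, ← neg_smul]
    congr 1
    simp [Complex.ext_iff]
  have hI : Complex.I * (2⁻¹ * Complex.I) = -2⁻¹ := by
    rw [mul_comm (2⁻¹ : ℂ) Complex.I, ← mul_assoc, Complex.I_mul_I]; ring
  have hxeq : x = h + Complex.I • k := by
    rw [hh, hk, smul_smul, hI, neg_smul]
    module
  have hxstar : star x = h - Complex.I • k := by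
    rw [hh, hk, smul_smul, hI, neg_smul]
    module
  have hEh : IsSelfAdjoint (E h) := E_selfAdjoint hE hsa
  have hEk : IsSelfAdjoint (E k) := E_selfAdjoint hE ksa
  have e1 : E (star x) = E h - Complex.I • E k := by
    rw [hxstar, E_sub hE, hE.2.2.2.1, hE.2.2.2.1]
  have e2 : E x = E h + Complex.I • E k := by
    rw [hxeq, hE.2.2.1, hE.2.2.2.1, hE.2.2.2.1]
  rw [e1, e2, star_add, star_smul, hEh.star_eq, hEk.star_eq]
  simp [Complex.star_def, Complex.conj_I, neg_smul, sub_eq_add_neg]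

lemma E_continuous (hE : IsCondExp B E) : Continuous E := by
  refine (LipschitzWith.of_dist_le_mul (K := 1) fun x y => ?_).continuous
  rw [dist_eq_norm, dist_eq_norm, ← E_sub hE]
  simpa using hE.2.2.2.2.2.1 (x - y)

lemma E_schwarz (hB : IsCStarSubalgebra B) (hE : IsCondExp B E) (x : A) :
    star (E x) * E x ≤ E (star x * x) := by
  set b : A := E x with hb
  have hbB : b ∈ B := hE.1 x
  have hbsB : star b ∈ B := hB.2.2.2.2.1 b hbB
  have key : (0:A) ≤ E (star (x - b) * (x - b)) := hE.2.2.2.2.1 _ (star_mul_self_nonneg _)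
  have expand : star (x - b) * (x - b)
      = star x * x - star x * b - (star b * x - star b * b) := by
    rw [star_sub]; noncomm_ring
  have hE1 : E (star x * b) = E (star x) * b := (hE.2.2.2.2.2.2 b hbB (star x)).2
  have hE2 : E (star b * x) = star b * E x := (hE.2.2.2.2.2.2 (star b) hbsB x).1
  have hE3 : E (star b * b) = star b * b := hE.2.1 _ (hB.2.2.1 _ hbsB _ hbB)
  have : E (star (x - b) * (x - b)) = E (star x * x) - star b * b := by
    rw [expand, E_sub hE, E_sub hE, E_sub hE, hE1, hE2, hE3, E_star hE]
    simp only [← hb]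
    abel
  rw [this] at key
  exact sub_nonneg.mp key


-- new material
variable {K' : Set A}

lemma Kp_smul (hB : IsCStarSubalgebra B) (hK : IsRegularIdealIn B K') (c : ℂ) {x : A}
    (hx : x ∈ K') : c • x ∈ K' := by
  rw [hK.2] at hx ⊢
  exact ⟨ann_smul_mem c hx.1, hB.2.2.2.1 c x hx.2⟩

lemma Kp_smulR (hB : IsCStarSubalgebra B) (hK : IsRegularIdealIn B K') (r : ℝ) {x : A}
    (hx : x ∈ K') : r • x ∈ K' := by
  rw [← Complex.coe_smul]; exact Kp_smul hB hK _ hx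

lemma hered (hK : IsRegularIdealIn B K') {a b : A} (ha : 0 ≤ a) (hab : a ≤ b) (hb : b ∈ K') :
    a ∈ ann (ann K' ∩ B) := by
  rintro l ⟨hlann, hlB⟩
  have hlb : l * b = 0 := (hlann b hb).1
  have hbl : b * l = 0 := (hlann b hb).2
  have hasa : star a = a := (IsSelfAdjoint.of_nonneg ha).star_eq
  have haa : (0:A) ≤ a * a := by
    have := star_mul_self_nonneg a; rwa [hasa] at this
  constructor
  · -- a * l = 0
    have h1 : star l * a * l = 0 := by
      refine le_antisymm ?_ (star_left_conjugate_nonneg ha l)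
      calc star l * a * l ≤ star l * b * l := star_left_conjugate_le_conjugate hab l
      _ = star l * (b * l) := by rw [mul_assoc]
      _ = 0 := by rw [hbl, mul_zero]
    have h2 : star l * (a * a) * l = 0 := by
      refine le_antisymm ?_ (star_left_conjugate_nonneg haa l)
      calc star l * (a * a) * l ≤ star l * (‖a‖ • a) * l :=
        star_left_conjugate_le_conjugate (sq_le_norm_smul ha) l
      _ = ‖a‖ • (star l * a * l) := by rw [mul_smul_comm, smul_mul_assoc]
      _ = 0 := by rw [h1, smul_zero]
    have h3 : star (a * l) * (a * l) = star l * (a * a) * l := by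
      rw [star_mul, hasa]; noncomm_ring
    exact eq_zero_of_star_mul_self (by rw [h3, h2])
  · -- l * a = 0
    have h1 : l * a * star l = 0 := by
      refine le_antisymm ?_ ?_
      · calc l * a * star l = star (star l) * a * star l := by rw [star_star]
        _ ≤ star (star l) * b * star l := star_left_conjugate_le_conjugate hab (star l)
        _ = l * b * star l := by rw [star_star]
        _ = 0 := by rw [hlb, zero_mul]
      · have := star_left_conjugate_nonneg ha (star l); rwa [star_star] at this
    have h2 : l * (a * a) * star l = 0 := by
      refine le_antisymm ?_ ?_
      · calc l * (a * a) * star l = star (star l) * (a * a) * star l := by rw [star_star]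
        _ ≤ star (star l) * (‖a‖ • a) * star l :=
          star_left_conjugate_le_conjugate (sq_le_norm_smul ha) (star l)
        _ = ‖a‖ • (l * a * star l) := by rw [star_star, mul_smul_comm, smul_mul_assoc]
        _ = 0 := by rw [h1, smul_zero]
      · have := star_left_conjugate_nonneg haa (star l); rwa [star_star] at this
    have h3 : (l * a) * star (l * a) = l * (a * a) * star l := by
      rw [star_mul, hasa]; noncomm_ring
    exact eq_zero_of_mul_star_self (by rw [h3, h2])

lemma mem_of_nonneg_le (hK : IsRegularIdealIn B K') {a b : A} (haB : a ∈ B) (ha : 0 ≤ a)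
    (hab : a ≤ b) (hb : b ∈ K') : a ∈ K' := by
  rw [hK.2]; exact ⟨hered hK ha hab hb, haB⟩

lemma Kp_mem_of_star_mul_self (hB : IsCStarSubalgebra B) (hK : IsRegularIdealIn B K')
    {b : A} (hbB : b ∈ B) (h : star b * b ∈ K') : b ∈ K' :=
  mem_of_star_mul_self_mem K' hK.1.2.2.2.2 hK.1.2.2.1 (fun r x hx => Kp_smulR hB hK r hx)
    (fun x hx => (hK.1.2.2.2.1 b hbB x hx).1)
    (fun x hx => (hK.1.2.2.2.1 (star b * b) (hK.1.1 h) x hx).2) h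

lemma L_reg (hB : IsCStarSubalgebra B) (hK : IsRegularIdealIn B K') :
    IsRegularIdealIn B (ann K' ∩ B) := by
  have hann : ann (ann K' ∩ B) ∩ B = K' := hK.2.symm
  constructor
  · refine ⟨Set.inter_subset_right, ⟨ann_zero_mem K', hB.1⟩, ?_, ?_,
      (ann_isClosed K').inter hB.2.2.2.2.2⟩
    · rintro x ⟨hx, hxB⟩ y ⟨hy, hyB⟩
      exact ⟨ann_add_mem hx hy, hB.2.1 x hxB y hyB⟩
    · rintro b hb x ⟨hx, hxB⟩
      refine ⟨⟨fun k hk => ⟨?_, ?_⟩, hB.2.2.1 b hb x hxB⟩,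
        ⟨fun k hk => ⟨?_, ?_⟩, hB.2.2.1 x hxB b hb⟩⟩
      · rw [mul_assoc, (hx k hk).1, mul_zero]
      · rw [← mul_assoc]; exact (hx _ ((hK.1.2.2.2.1 b hb k hk).2)).2
      · rw [mul_assoc]; exact (hx _ ((hK.1.2.2.2.1 b hb k hk).1)).1
      · rw [← mul_assoc, (hx k hk).2, zero_mul]
  · rw [hann]

lemma L_inv (hB : IsCStarSubalgebra B) (hN : IsNormalizerSemigroup B N)
    (hK : IsRegularIdealIn B K') (hKinv : InvariantUnder N K') :
    InvariantUnder N (ann K' ∩ B) := by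
  rintro n hn l ⟨hl, hlB⟩
  refine ⟨fun k hk => ⟨?_, ?_⟩, (hN.1 n hn).1 l hlB⟩
  · -- (n * l * star n) * k = 0
    have hkB : k ∈ B := hK.1.1 hk
    have hkk : k * star k ∈ K' := (hK.1.2.2.2.1 (star k) (hB.2.2.2.2.1 k hkB) k hk).2
    have hm : star n * (k * star k) * n ∈ K' := by
      have := hKinv (star n) (hN.2.1 n hn) _ hkk
      rwa [star_star] at this
    have hzero : l * (star n * (k * star k) * n) = 0 := (hl _ hm).1
    have hcc : (n * l * star n * k) * star (n * l * star n * k)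
        = n * (l * (star n * (k * star k) * n)) * (star l * star n) := by
      simp only [star_mul, star_star]; noncomm_ring
    refine eq_zero_of_mul_star_self ?_
    rw [hcc, hzero, mul_zero, zero_mul]
  · -- k * (n * l * star n) = 0
    have hkB : k ∈ B := hK.1.1 hk
    have hkk : star k * k ∈ K' := (hK.1.2.2.2.1 (star k) (hB.2.2.2.2.1 k hkB) k hk).1
    have hm : star n * (star k * k) * n ∈ K' := by
      have := hKinv (star n) (hN.2.1 n hn) _ hkk
      rwa [star_star] at this
    have hzero : (star n * (star k * k) * n) * l = 0 := (hl _ hm).2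
    have hcc : star (k * (n * l * star n)) * (k * (n * l * star n))
        = (n * star l) * ((star n * (star k * k) * n) * l) * star n := by
      simp only [star_mul, star_star]; noncomm_ring
    refine eq_zero_of_star_mul_self ?_
    rw [hcc, hzero, mul_zero, zero_mul]

-- J lemmas
lemma J_zero (hE : IsCondExp B E) (hK : IsRegularIdealIn B K') : (0:A) ∈ JSet E K' := by
  show E (star (0:A) * 0) ∈ K'
  have : star (0:A) * 0 = 0 := by simp
  rw [this, E_zero hE]
  exact hK.1.2.1

lemma J_smul (hB : IsCStarSubalgebra B) (hE : IsCondExp B E) (hK : IsRegularIdealIn B K')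
    (c : ℂ) {x : A} (hx : x ∈ JSet E K') : c • x ∈ JSet E K' := by
  show E (star (c • x) * (c • x)) ∈ K'
  have h1 : star (c • x) * (c • x) = (star c * c) • (star x * x) := by
    rw [star_smul, smul_mul_assoc, mul_smul_comm, smul_smul]
  rw [h1, hE.2.2.2.1]
  exact Kp_smul hB hK _ hx

lemma J_add (hB : IsCStarSubalgebra B) (hE : IsCondExp B E) (hK : IsRegularIdealIn B K')
    {x y : A} (hx : x ∈ JSet E K') (hy : y ∈ JSet E K') : x + y ∈ JSet E K' := by
  show E (star (x + y) * (x + y)) ∈ K'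
  set s : A := (star x * x + star y * y) + (star x * x + star y * y) with hs
  have hid : s - star (x + y) * (x + y) = star (x - y) * (x - y) := by
    rw [hs]; simp only [star_add, star_sub]; noncomm_ring
  have hle : star (x + y) * (x + y) ≤ s := by
    rw [← sub_nonneg, hid]; exact star_mul_self_nonneg _
  have hsK : E s ∈ K' := by
    rw [hs, hE.2.2.1, hE.2.2.1]
    exact hK.1.2.2.1 _ (hK.1.2.2.1 _ hx _ hy) _ (hK.1.2.2.1 _ hx _ hy)
  exact mem_of_nonneg_le hK (hE.1 _) (hE.2.2.2.2.1 _ (star_mul_self_nonneg _))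
    (E_mono hE hle) hsK

lemma J_mul_left (hB : IsCStarSubalgebra B) (hE : IsCondExp B E) (hK : IsRegularIdealIn B K')
    (a : A) {x : A} (hx : x ∈ JSet E K') : a * x ∈ JSet E K' := by
  show E (star (a * x) * (a * x)) ∈ K'
  have hsa : IsSelfAdjoint (star a * a) := IsSelfAdjoint.star_mul_self a
  have h1 : star (a * x) * (a * x) = star x * (star a * a) * x := by
    rw [star_mul]; noncomm_ring
  have h2 : star x * (star a * a) * x ≤ ‖star a * a‖ • (star x * x) :=
    CStarAlgebra.star_left_conjugate_le_norm_smul hsa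
  have h3 : E (star (a * x) * (a * x)) ≤ ‖star a * a‖ • E (star x * x) := by
    rw [h1]
    calc E (star x * (star a * a) * x) ≤ E (‖star a * a‖ • (star x * x)) := E_mono hE h2
    _ = ‖star a * a‖ • E (star x * x) := E_smulR hE _ _
  exact mem_of_nonneg_le hK (hE.1 _) (hE.2.2.2.2.1 _ (star_mul_self_nonneg _)) h3
    (Kp_smulR hB hK _ hx)

lemma J_closed (hE : IsCondExp B E) (hK : IsRegularIdealIn B K') : IsClosed (JSet E K') :=
  hK.1.2.2.2.2.preimage ((E_continuous hE).comp (continuous_star.mul continuous_id))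

lemma K_subset_J (hB : IsCStarSubalgebra B) (hE : IsCondExp B E)
    (hK : IsRegularIdealIn B K') : K' ⊆ JSet E K' := by
  intro k hk
  show E (star k * k) ∈ K'
  have h2 : star k * k ∈ K' := (hK.1.2.2.2.1 (star k) (hB.2.2.2.2.1 k (hK.1.1 hk)) k hk).1
  rw [hE.2.1 _ (hK.1.1 h2)]
  exact h2

lemma J_mul_right (hB : IsCStarSubalgebra B) (hN : IsNormalizerSemigroup B N)
    (hE : IsCondExp B E) (hEinv : IsInvariantCondExp N E) (hK : IsRegularIdealIn B K')
    (hKinv : InvariantUnder N K') {x : A} (hx : x ∈ JSet E K') (a : A) :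
    x * a ∈ JSet E K' := by
  set S : Submodule ℂ A :=
    { carrier := {a : A | x * a ∈ JSet E K'}
      add_mem' := by
        intro u v hu hv
        show x * (u + v) ∈ JSet E K'
        rw [mul_add]
        exact J_add hB hE hK hu hv
      zero_mem' := by
        show x * 0 ∈ JSet E K'
        rw [mul_zero]
        exact J_zero hE hK
      smul_mem' := by
        intro c u hu
        show x * (c • u) ∈ JSet E K'
        rw [mul_smul_comm]
        exact J_smul hB hE hK c hu } with hS
  have hNsub : N ⊆ (S : Set A) := by
    intro n hn
    show x * n ∈ JSet E K'
    show E (star (x * n) * (x * n)) ∈ K'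
    have h1 : star (x * n) * (x * n) = star n * (star x * x) * n := by
      rw [star_mul]; noncomm_ring
    have h2 : E (star n * (star x * x) * n) = star n * E (star x * x) * n := by
      have := hEinv (star n) (hN.2.1 n hn) (star x * x)
      rwa [star_star] at this
    have h3 : star n * E (star x * x) * n ∈ K' := by
      have := hKinv (star n) (hN.2.1 n hn) _ hx
      rwa [star_star] at this
    rw [h1, h2]
    exact h3
  have hclosed : IsClosed (S : Set A) := by
    have : (S : Set A) = (fun b : A => x * b) ⁻¹' (JSet E K') := rfl
    rw [this]
    exact (J_closed hE hK).preimage (continuous_const.mul continuous_id)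
  have hspan : (Submodule.span ℂ N : Set A) ⊆ (S : Set A) := by
    have := Submodule.span_le.mpr hNsub
    exact_mod_cast this
  have hsub : closure (Submodule.span ℂ N : Set A) ⊆ (S : Set A) :=
    closure_minimal hspan hclosed
  have haS : a ∈ (S : Set A) := hsub (by rw [hN.2.2.2]; trivial)
  exact haS

lemma E_image_J (hB : IsCStarSubalgebra B) (hE : IsCondExp B E)
    (hK : IsRegularIdealIn B K') : E '' JSet E K' = K' := by
  apply Set.Subset.antisymm
  · rintro _ ⟨x, hx, rfl⟩
    have h1 : star (E x) * E x ≤ E (star x * x) := E_schwarz hB hE x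
    have h2 : star (E x) * E x ∈ K' :=
      mem_of_nonneg_le hK (hB.2.2.1 _ (hB.2.2.2.2.1 _ (hE.1 x)) _ (hE.1 x))
        (star_mul_self_nonneg _) h1 hx
    exact Kp_mem_of_star_mul_self hB hK (hE.1 x) h2
  · intro k hk
    exact ⟨k, K_subset_J hB hE hK hk, hE.2.1 k (hK.1.1 hk)⟩

lemma J_inter_B (hB : IsCStarSubalgebra B) (hE : IsCondExp B E)
    (hK : IsRegularIdealIn B K') : JSet E K' ∩ B = K' := by
  apply Set.Subset.antisymm
  · rintro x ⟨hxJ, hxB⟩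
    have hxx : star x * x ∈ B := hB.2.2.1 _ (hB.2.2.2.2.1 _ hxB) _ hxB
    have hxK : star x * x ∈ K' := by
      have : E (star x * x) ∈ K' := hxJ
      rwa [hE.2.1 _ hxx] at this
    exact Kp_mem_of_star_mul_self hB hK hxB hxK
  · intro k hk
    exact ⟨K_subset_J hB hE hK hk, hK.1.1 hk⟩

lemma ann_J (hB : IsCStarSubalgebra B) (hN : IsNormalizerSemigroup B N)
    (hE : IsCondExp B E) (hEf : IsFaithful E) (hEinv : IsInvariantCondExp N E)
    (hK : IsRegularIdealIn B K') (hKinv : InvariantUnder N K') :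
    ann (JSet E K') = JSet E (ann K' ∩ B) := by
  have hL : IsRegularIdealIn B (ann K' ∩ B) := L_reg hB hK
  have hLinv : InvariantUnder N (ann K' ∩ B) := L_inv hB hN hK hKinv
  apply Set.Subset.antisymm
  · intro a ha
    show E (star a * a) ∈ ann K' ∩ B
    refine ⟨fun k hk => ?_, hE.1 _⟩
    have hkB : k ∈ B := hK.1.1 hk
    have hkJ : k ∈ JSet E K' := K_subset_J hB hE hK hk
    have hak : a * k = 0 := (ha k hkJ).1
    constructor
    · calc E (star a * a) * k = E ((star a * a) * k) :=
        ((hE.2.2.2.2.2.2 k hkB (star a * a)).2).symm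
      _ = E 0 := by rw [mul_assoc, hak, mul_zero]
      _ = 0 := E_zero hE
    · have hkk : star k * k ∈ K' := (hK.1.2.2.2.1 (star k) (hB.2.2.2.2.1 k hkB) k hk).1
      have h2 : a * (star k * k) = 0 := (ha _ (K_subset_J hB hE hK hkk)).1
      have hksa : k * star a = 0 := by
        refine eq_zero_of_star_mul_self ?_
        have : star (k * star a) * (k * star a) = (a * (star k * k)) * star a := by
          simp only [star_mul, star_star]; noncomm_ring
        rw [this, h2, zero_mul]
      calc k * E (star a * a) = E (k * (star a * a)) :=
        ((hE.2.2.2.2.2.2 k hkB (star a * a)).1).symm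
      _ = E 0 := by rw [← mul_assoc, hksa, zero_mul]
      _ = 0 := E_zero hE
  · intro a ha
    have key : ∀ y : A, y ∈ JSet E K' → y ∈ JSet E (ann K' ∩ B) → y = 0 := by
      intro y h1 h2
      have hp : E (star y * y) ∈ K' := h1
      have hpL : E (star y * y) ∈ ann K' := h2.1
      have hpp : E (star y * y) * E (star y * y) = 0 := (hpL _ hp).1
      have hpos : (0:A) ≤ E (star y * y) := hE.2.2.2.2.1 _ (star_mul_self_nonneg y)
      have hsa : star (E (star y * y)) = E (star y * y) :=
        (IsSelfAdjoint.of_nonneg hpos).star_eq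
      exact hEf y (eq_zero_of_star_mul_self (by rw [hsa, hpp]))
    intro x hxJ
    constructor
    · exact key (a * x) (J_mul_left hB hE hK a hxJ)
        (J_mul_right hB hN hE hEinv hL hLinv ha x)
    · exact key (x * a) (J_mul_right hB hN hE hEinv hK hKinv hxJ a)
        (J_mul_left hB hE hL x ha)


end JKAux

theorem JK_isRegularIdeal {B N : Set A} (hB : IsRegularInclusion B)
    (hN : IsNormalizerSemigroup B N) (E : A → A) (hE : IsCondExp B E)
    (hEf : IsFaithful E) (hEinv : IsInvariantCondExp N E)
    (K : Set A) (hK : IsRegularIdealIn B K) (hKinv : InvariantUnder N K) :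
    IsRegularIdeal {a : A | E (star a * a) ∈ K} ∧
    {a : A | E (star a * a) ∈ K} ∩ B = K ∧
    E '' {a : A | E (star a * a) ∈ K} = K ∧
    ann {a : A | E (star a * a) ∈ K} = {a : A | E (star a * a) ∈ ann K ∩ B} := by
  classical
  obtain ⟨⟨hBsub, _⟩, _⟩ := hB
  have hL : IsRegularIdealIn B (ann K ∩ B) := JKAux.L_reg hBsub hK
  have hLinv : InvariantUnder N (ann K ∩ B) := JKAux.L_inv hBsub hN hK hKinv
  have hJ : {a : A | E (star a * a) ∈ K} = JSet E K := rfl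
  have hJL : {a : A | E (star a * a) ∈ ann K ∩ B} = JSet E (ann K ∩ B) := rfl
  rw [hJ, hJL]
  refine ⟨⟨⟨⟨?_, ?_, ?_⟩, ?_⟩, ?_⟩, ?_, ?_, ?_⟩
  · exact JKAux.J_zero hE hK
  · exact fun x hx y hy => JKAux.J_add hBsub hE hK hx hy
  · exact fun a x hx => ⟨JKAux.J_mul_left hBsub hE hK a hx,
      JKAux.J_mul_right hBsub hN hE hEinv hK hKinv hx a⟩
  · exact JKAux.J_closed hE hK
  · rw [JKAux.ann_J hBsub hN hE hEf hEinv hK hKinv,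
        JKAux.ann_J hBsub hN hE hEf hEinv hL hLinv, ← hK.2]
  · exact JKAux.J_inter_B hBsub hE hK
  · exact JKAux.E_image_J hBsub hE hK
  · exact JKAux.ann_J hBsub hN hE hEf hEinv hK hKinv
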